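/- arXiv:1309.1264 — 3 statements merged into one kernel-verified Lean document; each statement's English description precedes it below -/
import Mathlib

section
/- RLEM 4-289 is equivalent to the rotary element: there exist bijections α : {H, V} → {q₀, q₁}, β : {n, e, s, w} → {a, b, c, d}, γ : {n', e', s', w'} → {s, t, u, v} such that for all states p and inputs x, δ_{4-289}(α(p), β(x)) = (α(p'), γ(y)) whenever δ_RE(p, x) = (p', y). -/
inductive REState | H | V
  deriving DecidableEq
instance : Fintype REState := Fintype.ofList [.H, .V] (fun x => by cases x <;> decide)
inductive REIn | n | e | s | w
  deriving DecidableEq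
instance : Fintype REIn := Fintype.ofList [.n, .e, .s, .w] (fun x => by cases x <;> decide)
inductive REOut | n' | e' | s' | w'
  deriving DecidableEq
instance : Fintype REOut := Fintype.ofList [.n', .e', .s', .w'] (fun x => by cases x <;> decide)

/-- The move function `δ_RE` of the rotary element. -/
def deltaRE : REState × REIn → REState × REOut
  | (.H, .n) => (.V, .w')
  | (.H, .e) => (.H, .w')
  | (.H, .s) => (.V, .e')
  | (.H, .w) => (.H, .e')
  | (.V, .n) => (.V, .s')
  | (.V, .e) => (.H, .n')
  | (.V, .s) => (.V, .n')
  | (.V, .w) => (.H, .s')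

inductive St289 | q0 | q1
  deriving DecidableEq
instance : Fintype St289 := Fintype.ofList [.q0, .q1] (fun x => by cases x <;> decide)
inductive In289 | a | b | c | d
  deriving DecidableEq
instance : Fintype In289 := Fintype.ofList [.a, .b, .c, .d] (fun x => by cases x <;> decide)
inductive Out289 | s | t | u | v
  deriving DecidableEq
instance : Fintype Out289 := Fintype.ofList [.s, .t, .u, .v] (fun x => by cases x <;> decide)

/-- The move function of RLEM 4-289. -/
def delta289 : St289 × In289 → St289 × Out289
  | (.q0, .a) => (.q0, .s)
  | (.q0, .b) => (.q0, .t)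
  | (.q0, .c) => (.q1, .s)
  | (.q0, .d) => (.q1, .t)
  | (.q1, .a) => (.q0, .u)
  | (.q1, .b) => (.q0, .v)
  | (.q1, .c) => (.q1, .v)
  | (.q1, .d) => (.q1, .u)

/-- RLEM 4-289 is equivalent to the rotary element: there are bijective
renamings of states, input symbols and output symbols transforming `δ_RE` into `δ_{4-289}`. -/
theorem rlem4_289_equiv_RE :
    ∃ (α : REState ≃ St289) (β : REIn ≃ In289) (γ : REOut ≃ Out289),
      ∀ (p : REState) (x : REIn),
        delta289 (α p, β x) = (α (deltaRE (p, x)).1, γ (deltaRE (p, x)).2) := by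
  refine ⟨⟨fun p => match p with | .H => .q0 | .V => .q1,
          fun q => match q with | .q0 => .H | .q1 => .V,
          fun p => by cases p <;> rfl, fun q => by cases q <;> rfl⟩,
        ⟨fun x => match x with | .n => .c | .e => .a | .s => .d | .w => .b,
          fun y => match y with | .a => .e | .b => .w | .c => .n | .d => .s,
          fun x => by cases x <;> rfl, fun y => by cases y <;> rfl⟩,
        ⟨fun x => match x with | .n' => .u | .e' => .t | .s' => .v | .w' => .s,
          fun y => match y with | .s => .w' | .t => .e' | .u => .n' | .v => .s',
          fun x => by cases x <;> rfl, fun y => by cases y <;> rfl⟩, ?_⟩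
  intro p x
  cases p <;> cases x <;> rfl
end

section
/- In a circuit C of m copies of RLEM 2-2 with connection function f and closure set W as defined, the external input b lies in the complement W̄ = (U ∪ V) − W, and exactly one of the external outputs s, t lies in W (the other in W̄). -/
/-- Vertices of a circuit of `m` copies of RLEM 2-2 (as in Statement 9). -/
inductive CPort (m : ℕ)
  | extIn : Bool → CPort m
  | extOut : Bool → CPort m
  | elemIn : Fin m → Bool → CPort m
  | elemOut : Fin m → Bool → CPort m
  deriving DecidableEq

/-- `U = {a, b} ∪ {sᵢ, tᵢ}`. -/
def Uset (m : ℕ) : Set (CPort m) :=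
  {p | (∃ x, p = .extIn x) ∨ ∃ i x, p = .elemOut i x}

/-- `V = {s, t} ∪ {aᵢ, bᵢ}`. -/
def Vset (m : ℕ) : Set (CPort m) :=
  {p | (∃ x, p = .extOut x) ∨ ∃ i x, p = .elemIn i x}

/-- Closure conditions defining `W` (containing `a = extIn false`). -/
def ClosedSet (m : ℕ) (f : CPort m → CPort m) (S : Set (CPort m)) : Prop :=
  (CPort.extIn false ∈ S) ∧
  (∀ x ∈ Uset m ∩ S, f x ∈ S) ∧
  (∀ i : Fin m, CPort.elemIn i false ∈ S → CPort.elemOut i false ∈ S) ∧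
  (∀ i : Fin m, CPort.elemIn i true ∈ S → CPort.elemOut i true ∈ S)

/-- The smallest closed set `W`. -/
def Wset (m : ℕ) (f : CPort m → CPort m) : Set (CPort m) :=
  ⋂₀ {S | ClosedSet m f S}

namespace Stmt10Aux

instance (m : ℕ) : Finite (CPort m) := by
  apply Finite.of_injective
    (fun p : CPort m => match p with
      | .extIn x => (Sum.inl (Sum.inl x) : (Bool ⊕ Bool) ⊕ ((Fin m × Bool) ⊕ (Fin m × Bool)))
      | .extOut x => Sum.inl (Sum.inr x)
      | .elemIn i x => Sum.inr (Sum.inl (i, x))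
      | .elemOut i x => Sum.inr (Sum.inr (i, x)))
  intro p q h
  cases p <;> cases q <;> simp_all

instance (m : ℕ) : Finite (Option (CPort m)) :=
  Finite.of_equiv (CPort m ⊕ PUnit.{1}) (Equiv.optionEquivSumPUnit.{0,0} (CPort m)).symm

variable {m : ℕ} (f : CPort m → CPort m)

/-- One deterministic step of signal propagation. -/
def g : CPort m → Option (CPort m)
  | .extIn x => some (f (.extIn x))
  | .elemOut i x => some (f (.elemOut i x))
  | .elemIn i x => some (.elemOut i x)
  | .extOut _ => none

/-- The trajectory starting at `a = extIn false`. -/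
def seq : ℕ → Option (CPort m)
  | 0 => some (.extIn false)
  | n + 1 => (seq n).bind (g f)

lemma mem_Uset (p : CPort m) :
    p ∈ Uset m ↔ (∃ x, p = .extIn x) ∨ ∃ i x, p = .elemOut i x := Iff.rfl

lemma mem_Vset (p : CPort m) :
    p ∈ Vset m ↔ (∃ x, p = .extOut x) ∨ ∃ i x, p = .elemIn i x := Iff.rfl

lemma g_ne_extIn (hmaps : Set.MapsTo f (Uset m) (Vset m))
    (p : CPort m) (x : Bool) : g f p ≠ some (.extIn x) := by
  intro h
  cases p with
  | extIn y =>
    have hv : f (.extIn y) ∈ Vset m := hmaps (Or.inl ⟨y, rfl⟩)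
    simp only [g, Option.some_inj] at h
    rw [h] at hv
    rcases hv with ⟨_, h'⟩ | ⟨_, _, h'⟩ <;> cases h'
  | elemOut i y =>
    have hv : f (.elemOut i y) ∈ Vset m := hmaps (Or.inr ⟨i, y, rfl⟩)
    simp only [g, Option.some_inj] at h
    rw [h] at hv
    rcases hv with ⟨_, h'⟩ | ⟨_, _, h'⟩ <;> cases h'
  | elemIn i y => simp [g] at h
  | extOut y => simp [g] at h

lemma g_inj (hmaps : Set.MapsTo f (Uset m) (Vset m)) (hinj : Set.InjOn f (Uset m))
    {p q r : CPort m} (hp : g f p = some r) (hq : g f q = some r) : p = q := by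
  have hU : ∀ u : CPort m, u ∈ Uset m → g f u = some (f u) := by
    rintro u (⟨x, rfl⟩ | ⟨i, x, rfl⟩) <;> rfl
  have hVcase : ∀ u : CPort m, u ∈ Uset m → ∀ i x, f u ≠ .elemOut i x := by
    intro u hu i x h
    have := hmaps hu
    rw [h] at this
    rcases this with ⟨_, h'⟩ | ⟨_, _, h'⟩ <;> cases h'
  have memU : ∀ (y : Bool), (CPort.extIn y : CPort m) ∈ Uset m := fun y => Or.inl ⟨y, rfl⟩
  have memU' : ∀ (i : Fin m) (y : Bool), (CPort.elemOut i y : CPort m) ∈ Uset m :=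
    fun i y => Or.inr ⟨i, y, rfl⟩
  cases p with
  | extIn a =>
    cases q with
    | extIn b =>
      have : f (.extIn a) = f (.extIn b) := by
        simpa [g] using hp.trans hq.symm
      exact hinj (memU a) (memU b) this
    | elemOut j b =>
      have : f (.extIn a) = f (.elemOut j b) := by
        simpa [g] using hp.trans hq.symm
      exact hinj (memU a) (memU' j b) this
    | elemIn j b =>
      simp only [g, Option.some_inj] at hp hq
      exact absurd (hp.trans hq.symm) (hVcase _ (memU a) j b)
    | extOut b => simp [g] at hq
  | elemOut i a =>
    cases q with
    | extIn b =>
      have : f (.elemOut i a) = f (.extIn b) := by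
        simpa [g] using hp.trans hq.symm
      exact hinj (memU' i a) (memU b) this
    | elemOut j b =>
      have : f (.elemOut i a) = f (.elemOut j b) := by
        simpa [g] using hp.trans hq.symm
      exact hinj (memU' i a) (memU' j b) this
    | elemIn j b =>
      simp only [g, Option.some_inj] at hp hq
      exact absurd (hp.trans hq.symm) (hVcase _ (memU' i a) j b)
    | extOut b => simp [g] at hq
  | elemIn i a =>
    cases q with
    | extIn b =>
      simp only [g, Option.some_inj] at hp hq
      exact absurd (hq.trans hp.symm) (hVcase _ (memU b) i a)
    | elemOut j b =>
      simp only [g, Option.some_inj] at hp hq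
      exact absurd (hq.trans hp.symm) (hVcase _ (memU' j b) i a)
    | elemIn j b =>
      simp only [g, Option.some_inj] at hp hq
      have h2 := hp.trans hq.symm
      injection h2 with h3 h4
      rw [h3, h4]
    | extOut b => simp [g] at hq
  | extOut a => simp [g] at hp

/-- The orbit of `a`. -/
def Orb : Set (CPort m) := {p | ∃ n, seq f n = some p}

lemma Orb_closed : ClosedSet m f (Orb f) := by
  refine ⟨⟨0, rfl⟩, ?_, ?_, ?_⟩
  · rintro x ⟨hU, n, hn⟩
    refine ⟨n + 1, ?_⟩
    rcases hU with ⟨y, rfl⟩ | ⟨i, y, rfl⟩ <;> simp [seq, hn, g]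
  · rintro i ⟨n, hn⟩
    exact ⟨n + 1, by simp [seq, hn, g]⟩
  · rintro i ⟨n, hn⟩
    exact ⟨n + 1, by simp [seq, hn, g]⟩

lemma Wset_closed : ClosedSet m f (Wset m f) := by
  refine ⟨?_, ?_, ?_, ?_⟩
  · intro S hS; exact hS.1
  · rintro x ⟨hU, hx⟩ S hS
    exact hS.2.1 x ⟨hU, hx S hS⟩
  · intro i hx S hS
    exact hS.2.2.1 i (hx S hS)
  · intro i hx S hS
    exact hS.2.2.2 i (hx S hS)

lemma W_subset_Orb : Wset m f ⊆ Orb f := fun _ hp => hp _ (Orb_closed f)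

lemma Orb_subset_W : Orb f ⊆ Wset m f := by
  rintro p ⟨n, hn⟩
  induction n generalizing p with
  | zero =>
    simp only [seq, Option.some_inj] at hn
    exact hn ▸ (Wset_closed f).1
  | succ n ih =>
    simp only [seq] at hn
    rcases hq : seq f n with _ | q
    · rw [hq] at hn; cases hn
    · rw [hq] at hn
      have hqW : q ∈ Wset m f := ih hq
      cases q with
      | extIn y =>
        simp only [g, Option.bind_some, Option.some_inj] at hn
        exact hn ▸ (Wset_closed f).2.1 _ ⟨Or.inl ⟨y, rfl⟩, hqW⟩
      | elemOut i y =>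
        simp only [g, Option.bind_some, Option.some_inj] at hn
        exact hn ▸ (Wset_closed f).2.1 _ ⟨Or.inr ⟨i, y, rfl⟩, hqW⟩
      | elemIn i y =>
        simp only [g, Option.bind_some, Option.some_inj] at hn
        cases y with
        | false => exact hn ▸ (Wset_closed f).2.2.1 i hqW
        | true => exact hn ▸ (Wset_closed f).2.2.2 i hqW
      | extOut y => simp [g] at hn

lemma seq_none_succ {n : ℕ} (h : seq f n = none) : seq f (n + 1) = none := by
  simp [seq, h]

lemma seq_none_after {n : ℕ} (h : seq f n = none) : ∀ k, seq f (n + k) = none := by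
  intro k
  induction k with
  | zero => exact h
  | succ k ih => exact seq_none_succ f ih

lemma seq_stop {n : ℕ} {x : Bool} (h : seq f n = some (.extOut x)) :
    ∀ k, seq f (n + 1 + k) = none := by
  apply seq_none_after
  simp [seq, h, g]

lemma seq_cancel (hmaps : Set.MapsTo f (Uset m) (Vset m)) (hinj : Set.InjOn f (Uset m))
    {n n' : ℕ} {r : CPort m} (h : seq f (n + 1) = some r) (h' : seq f (n' + 1) = some r) :
    seq f n = seq f n' := by
  simp only [seq] at h h'
  rcases hp : seq f n with _ | p
  · rw [hp] at h; cases h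
  rcases hq : seq f n' with _ | q
  · rw [hq] at h'; cases h'
  rw [hp] at h; rw [hq] at h'
  simp only [Option.bind_some] at h h'
  exact congrArg some (g_inj f hmaps hinj h h')

lemma seq_back (hmaps : Set.MapsTo f (Uset m) (Vset m)) (hinj : Set.InjOn f (Uset m))
    {d : ℕ} : ∀ n, seq f n = seq f (n + d) → seq f n ≠ none → seq f 0 = seq f d := by
  intro n
  induction n with
  | zero => intro h _; simpa using h
  | succ n ih =>
    intro h hs
    rcases hr : seq f (n + 1) with _ | r
    · exact absurd hr hs
    have h' : seq f (n + d + 1) = some r := by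
      rw [show n + d + 1 = n + 1 + d by ring, ← h, hr]
    have := seq_cancel f hmaps hinj hr h'
    rcases hx : seq f n with _ | x
    · rw [hx] at this
      have : seq f (n + 1) = none := seq_none_succ f (this.symm ▸ hx)
      rw [this] at hr; cases hr
    · exact ih (this) (by rw [hx]; simp)

lemma exists_extOut (hmaps : Set.MapsTo f (Uset m) (Vset m))
    (hinj : Set.InjOn f (Uset m)) : ∃ x n, seq f n = some (CPort.extOut x) := by
  by_contra hcon
  push_neg at hcon
  -- then seq is always some
  have hall : ∀ n, seq f n ≠ none := by
    intro n
    induction n with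
    | zero => simp [seq]
    | succ n ih =>
      rcases hp : seq f n with _ | p
      · exact absurd hp ih
      cases p with
      | extIn y => simp [seq, hp, g]
      | elemOut i y => simp [seq, hp, g]
      | elemIn i y => simp [seq, hp, g]
      | extOut y => exact absurd hp (hcon y n)
  obtain ⟨n, n', hne, heq⟩ :=
    Finite.exists_ne_map_eq_of_infinite (fun n : ℕ => seq f n)
  wlog hlt : n < n' generalizing n n'
  · exact this n' n hne.symm heq.symm (by omega)
  have hzero : seq f 0 = seq f (n' - n) :=
    seq_back f hmaps hinj n (by rw [heq]; congr 1; omega) (hall n)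
  have hd : 0 < n' - n := by omega
  -- seq f (n' - n) = some (extIn false), but extIn is never in the range of g
  obtain ⟨d, hdeq⟩ : ∃ d, n' - n = d + 1 := ⟨n' - n - 1, by omega⟩
  rw [hdeq] at hzero
  simp only [seq] at hzero
  rcases hp : seq f d with _ | p
  · rw [hp] at hzero; cases hzero
  rw [hp] at hzero
  simp only [Option.bind_some] at hzero
  exact g_ne_extIn f hmaps p false hzero.symm

lemma extIn_true_not_in_Orb (hmaps : Set.MapsTo f (Uset m) (Vset m)) :
    CPort.extIn true ∉ Orb f := by
  rintro ⟨n, hn⟩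
  cases n with
  | zero => simp [seq] at hn
  | succ n =>
    simp only [seq] at hn
    rcases hp : seq f n with _ | p
    · rw [hp] at hn; cases hn
    rw [hp] at hn
    simp only [Option.bind_some] at hn
    exact g_ne_extIn f hmaps p true hn

lemma extOut_unique {n n' : ℕ} {x x' : Bool}
    (h : seq f n = some (.extOut x)) (h' : seq f n' = some (.extOut x')) : x = x' := by
  rcases lt_trichotomy n n' with hlt | heq | hlt
  · have := seq_stop f h (n' - n - 1)
    rw [show n + 1 + (n' - n - 1) = n' by omega] at this
    rw [this] at h'; cases h'
  · rw [heq, h'] at h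
    injection h with h2
    injection h2 with h3
    exact h3.symm
  · have := seq_stop f h' (n - n' - 1)
    rw [show n' + 1 + (n - n' - 1) = n by omega] at this
    rw [this] at h; cases h

end Stmt10Aux

/-- if the connection function `f` maps `U` bijectively onto `V`, then the
external input `b` lies outside `W`, and exactly one of the external outputs `s, t`
lies in `W` (the other in its complement). -/
theorem b_not_in_W_and_one_output_in_W (m : ℕ) (f : CPort m → CPort m)
    (hmaps : Set.MapsTo f (Uset m) (Vset m))
    (hinj : Set.InjOn f (Uset m))
    (hsurj : Set.SurjOn f (Uset m) (Vset m)) :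
    CPort.extIn true ∉ Wset m f ∧
      (Xor' (CPort.extOut false ∈ Wset m f) (CPort.extOut true ∈ Wset m f)) := by
  open Stmt10Aux in
  constructor
  · intro h
    exact extIn_true_not_in_Orb f hmaps (W_subset_Orb f h)
  · obtain ⟨x, n, hn⟩ := exists_extOut f hmaps hinj
    have hxW : CPort.extOut x ∈ Wset m f := Orb_subset_W f ⟨n, hn⟩
    cases x with
    | false =>
      left
      refine ⟨hxW, fun h => ?_⟩
      obtain ⟨n', hn'⟩ := W_subset_Orb f h
      exact absurd (extOut_unique f hn hn') (by simp)
    | true =>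
      right
      refine ⟨hxW, fun h => ?_⟩
      obtain ⟨n', hn'⟩ := W_subset_Orb f h
      exact absurd (extOut_unique f hn hn') (by simp)
end

section
/- Let δ : Q × Σ → Q × Γ be a bijection with |Q| = 2 and |Σ| = |Γ| = k ≥ 3. Fix an output symbol y₀ ∈ Γ and an input symbol x₀ ∈ Σ and form the feedback machine on alphabet Σ − {x₀} and Γ − {y₀}: from state q on input x ∈ Σ − {x₀}, repeatedly apply δ, feeding output y₀ back as input x₀, until an output in Γ − {y₀} is produced. If this process always terminates, the resulting move function δ' : Q × (Σ − {x₀}) → Q × (Γ − {y₀}) is injective. -/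
/-- The one-step feedback map: a pair `(q, y)` with `y = y₀` is fed back as input `x₀`;
pairs with `y ≠ y₀` are final (fixed). -/
def fbStep {Q Sigma Gamma : Type} [DecidableEq Gamma]
    (δ : Q × Sigma → Q × Gamma) (y₀ : Gamma) (x₀ : Sigma) :
    Q × Gamma → Q × Gamma :=
  fun p => if p.2 = y₀ then δ (p.1, x₀) else p

/-- let `δ : Q × Σ → Q × Γ` be a bijection, `|Q| = 2`, `|Σ| = |Γ| = k ≥ 3`,
and fix a feedback pair `(y₀, x₀)`.  Suppose the feedback process always terminates, and
let `δ' : Q × (Σ − {x₀}) → Q × (Γ − {y₀})` be the resulting move function (i.e. for each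
`(q, x)` some iterate of the feedback step starting from `δ (q, x)` equals `δ' (q, x)`,
whose output component differs from `y₀`).  Then `δ'` is injective. -/
theorem feedback_move_function_injective
    (Q Sigma Gamma : Type) [Fintype Q] [Fintype Sigma] [Fintype Gamma]
    [DecidableEq Gamma] (k : ℕ) (hk : 3 ≤ k)
    (hQ : Fintype.card Q = 2) (hS : Fintype.card Sigma = k)
    (hG : Fintype.card Gamma = k)
    (δ : Q × Sigma → Q × Gamma) (hδ : Function.Bijective δ)
    (x₀ : Sigma) (y₀ : Gamma)
    (δ' : Q × {x : Sigma // x ≠ x₀} → Q × {y : Gamma // y ≠ y₀})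
    (hspec : ∀ (q : Q) (x : {x : Sigma // x ≠ x₀}), ∃ n : ℕ,
      (fbStep δ y₀ x₀)^[n] (δ (q, x.val)) = ((δ' (q, x)).1, (δ' (q, x)).2.val)) :
    Function.Injective δ' := by
  have hinj : Function.Injective δ := hδ.1
  set F := fbStep δ y₀ x₀ with hFdef
  -- a point with output ≠ y₀ is fixed by F
  have hfix : ∀ p : Q × Gamma, p.2 ≠ y₀ → F p = p := by
    intro p hp
    simp [hFdef, fbStep, hp]
  have hstab : ∀ (a : Q × Gamma) (i j : ℕ), (F^[i] a).2 ≠ y₀ →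
      F^[i + j] a = F^[i] a := by
    intro a i j h
    induction j with
    | zero => rfl
    | succ j ih =>
      rw [← Nat.add_assoc, Function.iterate_succ_apply', ih, hfix _ h]
  -- backward determinism
  have hback : ∀ p p' : Q × Gamma, p.2 = y₀ → p'.2 = y₀ → F p = F p' → p = p' := by
    intro p p' hp hp' h
    simp only [hFdef, fbStep, hp, hp', if_pos] at h
    have := hinj h
    have h1 : p.1 = p'.1 := (Prod.mk.injEq _ _ _ _).mp this |>.1
    exact Prod.ext h1 (hp.trans hp'.symm)
  -- key backward-induction lemma
  have key : ∀ (n m : ℕ), n ≤ m → ∀ (a b : Q × Gamma),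
      (∀ i < n, (F^[i] a).2 = y₀) → (∀ i < m, (F^[i] b).2 = y₀) →
      F^[n] a = F^[m] b → a = F^[m - n] b := by
    intro n
    induction n with
    | zero =>
      intro m _ a b _ _ hend
      simpa using hend
    | succ n ih =>
      intro m hnm a b ha hb hend
      obtain ⟨m', rfl⟩ : ∃ m', m = m' + 1 :=
        ⟨m - 1, by omega⟩
      rw [Function.iterate_succ_apply', Function.iterate_succ_apply'] at hend
      have h1 : F^[n] a = F^[m'] b :=
        hback _ _ (ha n (Nat.lt_succ_self n)) (hb m' (Nat.lt_succ_self m')) hend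
      have := ih m' (by omega) a b
        (fun i hi => ha i (by omega)) (fun i hi => hb i (by omega)) h1
      simpa [Nat.succ_sub_succ] using this
    -- start of main proof
  intro p p' heq
  obtain ⟨q, x⟩ := p
  obtain ⟨q', x'⟩ := p'
  obtain ⟨n₁, hn₁⟩ := hspec q x
  obtain ⟨m₁, hm₁⟩ := hspec q' x'
  set a := δ (q, x.val) with hadef
  set b := δ (q', x'.val) with hbdef
  set c : Q × Gamma := ((δ' (q, x)).1, (δ' (q, x)).2.val) with hcdef
  have hc2 : c.2 ≠ y₀ := (δ' (q, x)).2.property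
  have hm₁' : F^[m₁] b = c := by rw [hm₁, ← heq]
  -- minimal indices
  have hexa : ∃ i, (F^[i] a).2 ≠ y₀ := ⟨n₁, by rw [hn₁]; exact hc2⟩
  have hexb : ∃ i, (F^[i] b).2 ≠ y₀ := ⟨m₁, by rw [hm₁']; exact hc2⟩
  classical
  set n := Nat.find hexa with hndef
  set m := Nat.find hexb with hmdef
  have hn2 : (F^[n] a).2 ≠ y₀ := Nat.find_spec hexa
  have hm2 : (F^[m] b).2 ≠ y₀ := Nat.find_spec hexb
  have ha : ∀ i < n, (F^[i] a).2 = y₀ := by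
    intro i hi
    have := Nat.find_min hexa hi
    simpa using this
  have hb : ∀ i < m, (F^[i] b).2 = y₀ := by
    intro i hi
    have := Nat.find_min hexb hi
    simpa using this
  have hnle : n ≤ n₁ := Nat.find_le (by rw [hn₁]; exact hc2)
  have hmle : m ≤ m₁ := Nat.find_le (by rw [hm₁']; exact hc2)
  have hna : F^[n] a = c := by
    have : F^[n + (n₁ - n)] a = F^[n] a := hstab a n (n₁ - n) hn2
    rw [show n + (n₁ - n) = n₁ by omega] at this
    rw [← this, hn₁]
  have hmb : F^[m] b = c := by
    have : F^[m + (m₁ - m)] b = F^[m] b := hstab b m (m₁ - m) hm2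
    rw [show m + (m₁ - m) = m₁ by omega] at this
    rw [← this, hm₁']
  have hend : F^[n] a = F^[m] b := by rw [hna, hmb]
  -- a step that is the result of feedback comes from δ (·, x₀)
  have habeq : a = b := by
    rcases le_total n m with h | h
    · have hab := key n m h a b ha hb hend
      rcases Nat.eq_or_lt_of_le h with heqnm | hlt
      · have h0 : m - n = 0 := by omega
        rw [h0] at hab
        simpa using hab
      · exfalso
        obtain ⟨d, hd⟩ : ∃ d, m - n = d + 1 := ⟨m - n - 1, by omega⟩
        rw [hd, Function.iterate_succ_apply'] at hab
        have hdm : d < m := by omega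
        have : F (F^[d] b) = δ ((F^[d] b).1, x₀) := by
          exact if_pos (hb d hdm)
        rw [this] at hab
        have := hinj hab
        have : x.val = x₀ := ((Prod.mk.injEq _ _ _ _).mp this).2
        exact x.property this
    · have hab := key m n h b a hb ha hend.symm
      rcases Nat.eq_or_lt_of_le h with heqnm | hlt
      · have h0 : n - m = 0 := by omega
        rw [h0] at hab
        simpa using hab.symm
      · exfalso
        obtain ⟨d, hd⟩ : ∃ d, n - m = d + 1 := ⟨n - m - 1, by omega⟩
        rw [hd, Function.iterate_succ_apply'] at hab
        have hdn : d < n := by omega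
        have : F (F^[d] a) = δ ((F^[d] a).1, x₀) := by
          exact if_pos (ha d hdn)
        rw [this] at hab
        have := hinj hab
        have : x'.val = x₀ := ((Prod.mk.injEq _ _ _ _).mp this).2
        exact x'.property this
  have := hinj habeq
  obtain ⟨hq, hx⟩ := (Prod.mk.injEq _ _ _ _).mp this
  exact Prod.ext hq (Subtype.ext hx)
end
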